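/- arXiv:0904.1113 — 4 statements merged into one kernel-verified Lean document; each statement's English description precedes it below -/
import Mathlib

section
/- Let C, A, B be finite sets of points in ℝ^d with A ∩ C = ∅, B ⊆ C, |A| ≠ |B|, and let C' = (C \ B) ∪ A be nonempty. Suppose ‖cm(C) − (|B|·cm(B) − |A|·cm(A))/(|B| − |A|)‖ ≥ √(n·ε), where n ≥ |C'| and ε ≥ 0. Then |C'|·‖cm(C') − cm(C)‖² ≥ ε. -/
/-- Center of mass of a finite set of points in Euclidean space. -/
noncomputable def cm {d : ℕ} (S : Finset (EuclideanSpace ℝ (Fin d))) :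
    EuclideanSpace ℝ (Fin d) := (S.card : ℝ)⁻¹ • ∑ x ∈ S, x

theorem stmt_3 (d n : ℕ) [DecidableEq (EuclideanSpace ℝ (Fin d))] (ε : ℝ) (hε : 0 ≤ ε)
    (C A B C' : Finset (EuclideanSpace ℝ (Fin d)))
    (hAC : A ∩ C = ∅) (hBC : B ⊆ C) (hAB : A.card ≠ B.card)
    (hC' : C' = (C \ B) ∪ A) (hC'ne : C'.Nonempty) (hn : C'.card ≤ n)
    (hfar : Real.sqrt (n * ε) ≤
      ‖cm C - (((B.card : ℝ) - A.card)⁻¹ • (∑ x ∈ B, x - ∑ x ∈ A, x))‖) :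
    ε ≤ (C'.card : ℝ) * ‖cm C' - cm C‖ ^ 2 := by
  classical
  have hdisj : Disjoint (C \ B) A := by
    rw [Finset.disjoint_right]
    intro a ha hmem
    have : a ∈ A ∩ C := Finset.mem_inter.mpr ⟨ha, (Finset.mem_sdiff.mp hmem).1⟩
    simp [hAC] at this
  have hcard : (C'.card : ℝ) = (C.card : ℝ) - B.card + A.card := by
    subst hC'
    rw [Finset.card_union_of_disjoint hdisj, Finset.card_sdiff_of_subset hBC]
    push_cast [Nat.cast_sub (Finset.card_le_card hBC)]
    ring
  have hsum : ∑ x ∈ C', x = ∑ x ∈ C, x - ∑ x ∈ B, x + ∑ x ∈ A, x := by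
    subst hC'
    rw [Finset.sum_union hdisj, Finset.sum_sdiff_eq_sub hBC]
  have hm' : (0:ℝ) < C'.card := by exact_mod_cast Finset.card_pos.mpr hC'ne
  set δ : ℝ := (B.card : ℝ) - A.card with hδdef
  have hδ : δ ≠ 0 := sub_ne_zero.mpr (fun h => hAB (by exact_mod_cast h.symm))
  have hsumC : ∑ x ∈ C, x = (C.card : ℝ) • cm C := by
    rcases C.eq_empty_or_nonempty with h | h
    · simp [h, cm]
    · rw [cm, smul_inv_smul₀]
      exact Nat.cast_ne_zero.mpr (Finset.card_pos.mpr h).ne'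
  have hCC' : (C.card : ℝ) = (C'.card : ℝ) + δ := by rw [hcard, hδdef]; ring
  have key : cm C' - cm C =
      ((C'.card : ℝ)⁻¹ * δ) • (cm C - δ⁻¹ • (∑ x ∈ B, x - ∑ x ∈ A, x)) := by
    have h1 : cm C' = (C'.card : ℝ)⁻¹ •
        (((C'.card : ℝ) + δ) • cm C - ∑ x ∈ B, x + ∑ x ∈ A, x) := by
      rw [cm, hsum, hsumC, hCC']
    rw [h1]
    match_scalars
    · linear_combination inv_mul_cancel₀ hm'.ne'
    · linear_combination ((C'.card : ℝ)⁻¹) * mul_inv_cancel₀ hδ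
    · linear_combination (-(C'.card : ℝ)⁻¹) * mul_inv_cancel₀ hδ
  have hnorm : ‖cm C' - cm C‖ =
      (C'.card : ℝ)⁻¹ * |δ| * ‖cm C - δ⁻¹ • (∑ x ∈ B, x - ∑ x ∈ A, x)‖ := by
    rw [key, norm_smul, Real.norm_eq_abs, abs_mul, abs_inv, abs_of_pos hm']
  set R : ℝ := ‖cm C - δ⁻¹ • (∑ x ∈ B, x - ∑ x ∈ A, x)‖ with hR
  have hnε : (0:ℝ) ≤ (n:ℝ) * ε := mul_nonneg (Nat.cast_nonneg n) hε
  have hR2 : (n:ℝ) * ε ≤ R ^ 2 := by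
    calc (n:ℝ) * ε = Real.sqrt ((n:ℝ) * ε) ^ 2 := (Real.sq_sqrt hnε).symm
    _ ≤ R ^ 2 := by
        apply pow_le_pow_left₀ (Real.sqrt_nonneg _) hfar
  have hδ1 : (1:ℝ) ≤ |δ| := by
    have hne : ((B.card : ℤ) - A.card) ≠ 0 := by
      intro h
      exact hAB (by omega)
    have := Int.one_le_abs hne
    calc (1:ℝ) ≤ |((B.card : ℤ) - A.card : ℤ)| := by exact_mod_cast this
    _ = |δ| := by push_cast; rfl
  have hgoal : (C'.card : ℝ) * ‖cm C' - cm C‖ ^ 2 = δ ^ 2 * R ^ 2 / C'.card := by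
    rw [hnorm, mul_pow, mul_pow, sq_abs]
    linear_combination (δ ^ 2 * R ^ 2 * (C'.card : ℝ)⁻¹) * mul_inv_cancel₀ hm'.ne'
  rw [hgoal, le_div_iff₀ hm']
  calc ε * (C'.card : ℝ) ≤ ε * n := by
        apply mul_le_mul_of_nonneg_left _ hε
        exact_mod_cast hn
  _ = (n:ℝ) * ε := by ring
  _ ≤ R ^ 2 := hR2
  _ ≤ δ ^ 2 * R ^ 2 := by
      have hδsq : 1 ≤ δ ^ 2 := by nlinarith [sq_abs δ]
      nlinarith [sq_nonneg R]
end

section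
/- Let p, q, p', q' ∈ ℝ^d with p ≠ q and p' ≠ q'. Let H be the bisecting hyperplane of p and q and H' the bisecting hyperplane of p' and q'. Suppose ‖p − p'‖ ≤ δ and ‖q − q'‖ ≤ δ for some δ ≥ 0. Let θ be the angle between the unit normal vectors y = (q−p)/‖q−p‖ and y' = (q'−p')/‖q'−p'‖. Then for any two points u, v ∈ H, dist(v, H') − dist(u, H') ≤ ‖v − u‖·‖y' − y‖. -/
open RealInnerProductSpace

theorem stmt_5 (d : ℕ) (p q p' q' : EuclideanSpace ℝ (Fin d))
    (hpq : p ≠ q) (hpq' : p' ≠ q') (δ : ℝ) (hδ : 0 ≤ δ)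
    (hp : ‖p - p'‖ ≤ δ) (hq : ‖q - q'‖ ≤ δ)
    (H H' : Set (EuclideanSpace ℝ (Fin d)))
    (hH : H = {x | ‖x - p‖ = ‖x - q‖}) (hH' : H' = {x | ‖x - p'‖ = ‖x - q'‖})
    (y y' : EuclideanSpace ℝ (Fin d))
    (hy : y = ‖q - p‖⁻¹ • (q - p)) (hy' : y' = ‖q' - p'‖⁻¹ • (q' - p'))
    (u v : EuclideanSpace ℝ (Fin d)) (hu : u ∈ H) (hv : v ∈ H) :
    Metric.infDist v H' - Metric.infDist u H' ≤ ‖v - u‖ * ‖y' - y‖ := by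
  have key : ∀ a b x : EuclideanSpace ℝ (Fin d),
      ‖x - a‖ = ‖x - b‖ ↔ ⟪x - midpoint ℝ a b, b - a⟫ = 0 := by
    intro a b x
    rw [← dist_eq_norm, ← dist_eq_norm, ← AffineSubspace.mem_perpBisector_iff_dist_eq,
      AffineSubspace.mem_perpBisector_iff_inner_eq_zero]
    simp [vsub_eq_sub]
  set m' := midpoint ℝ p' q' with hm'def
  have hr' : (0:ℝ) < ‖q' - p'‖ := by
    rw [norm_pos_iff, sub_ne_zero]; exact Ne.symm hpq'
  have hy'norm : ‖y'‖ = 1 := by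
    rw [hy', norm_smul, norm_inv, norm_norm, inv_mul_cancel₀ hr'.ne']
  have hinner_y' : ∀ x : EuclideanSpace ℝ (Fin d),
      ⟪x, y'⟫ = ‖q' - p'‖⁻¹ * ⟪x, q' - p'⟫ := by
    intro x
    rw [hy', real_inner_smul_right]
  have hm'H' : m' ∈ H' := by
    rw [hH']
    exact (key p' q' m').mpr (by rw [sub_self, inner_zero_left])
  have hne : H'.Nonempty := ⟨m', hm'H'⟩
  -- orthogonality to y' of differences within H'
  have hzero : ∀ z ∈ H', ⟪z - m', y'⟫ = 0 := by
    intro z hz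
    rw [hH'] at hz
    have := (key p' q' z).mp hz
    rw [hinner_y', this, mul_zero]
  -- lower bound : |⟪u - m', y'⟫| ≤ infDist u H'
  have lower : ∀ x : EuclideanSpace ℝ (Fin d), |⟪x - m', y'⟫| ≤ Metric.infDist x H' := by
    intro x
    by_contra hlt
    rw [not_le] at hlt
    obtain ⟨z, hz, hd⟩ := (Metric.infDist_lt_iff hne).mp hlt
    have h1 : ⟪x - m', y'⟫ = ⟪x - z, y'⟫ := by
      have := hzero z hz
      have h2 : x - m' = (x - z) + (z - m') := by abel
      rw [h2, inner_add_left, this, add_zero]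
    have h2 : |⟪x - z, y'⟫| ≤ dist x z := by
      calc |⟪x - z, y'⟫| ≤ ‖x - z‖ * ‖y'‖ := abs_real_inner_le_norm _ _
        _ = dist x z := by rw [hy'norm, mul_one, dist_eq_norm]
    rw [h1] at hd
    linarith
  -- upper bound : infDist x H' ≤ |⟪x - m', y'⟫|
  have upper : ∀ x : EuclideanSpace ℝ (Fin d), Metric.infDist x H' ≤ |⟪x - m', y'⟫| := by
    intro x
    set c := ⟪x - m', y'⟫ with hc
    have hw : x - c • y' ∈ H' := by
      rw [hH']
      apply (key p' q' _).mpr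
      have : x - c • y' - m' = (x - m') - c • y' := by abel
      rw [this, inner_sub_left, real_inner_smul_left]
      have hy'q : ⟪y', q' - p'⟫ = ‖q' - p'‖ := by
        rw [hy', real_inner_smul_left, real_inner_self_eq_norm_sq]
        field_simp
      rw [hy'q, hc, hinner_y']
      field_simp
      simp
    calc Metric.infDist x H' ≤ dist x (x - c • y') := Metric.infDist_le_dist_of_mem hw
      _ = ‖c • y'‖ := by rw [dist_eq_norm]; congr 1; abel
      _ = |c| := by rw [norm_smul, hy'norm, mul_one, Real.norm_eq_abs]
  -- orthogonality of v - u to y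
  have hvu : ⟪v - u, y⟫ = 0 := by
    rw [hH] at hu hv
    have hu' := (key p q u).mp hu
    have hv' := (key p q v).mp hv
    have h3 : ⟪v - u, q - p⟫ = 0 := by
      have h4 : v - u = (v - midpoint ℝ p q) - (u - midpoint ℝ p q) := by abel
      rw [h4, inner_sub_left, hu', hv', sub_zero]
    rw [hy, real_inner_smul_right, h3, mul_zero]
  -- conclude
  calc Metric.infDist v H' - Metric.infDist u H'
      ≤ |⟪v - m', y'⟫| - |⟪u - m', y'⟫| := sub_le_sub (upper v) (lower u)
    _ ≤ |⟪v - m', y'⟫ - ⟪u - m', y'⟫| := abs_sub_abs_le_abs_sub _ _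
    _ = |⟪v - u, y'⟫| := by
        rw [← inner_sub_left]
        congr 2
        abel
    _ = |⟪v - u, y' - y⟫| := by rw [inner_sub_right, hvu, sub_zero]
    _ ≤ ‖v - u‖ * ‖y' - y‖ := abs_real_inner_le_norm _ _
end

section
/- Let p, q, q'' ∈ ℝ^d with p ≠ q and p ≠ q'', and let θ be the angle between q − p and q'' − p. Then sin(θ/2) ≤ ‖q'' − q‖ / ‖p − q‖. -/
theorem stmt_7 (d : ℕ) (p q q'' : EuclideanSpace ℝ (Fin d))
    (hpq : p ≠ q) (hpq'' : p ≠ q'') (θ : ℝ) (hθ0 : 0 ≤ θ) (hθπ : θ ≤ Real.pi)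
    (hcos : Real.cos θ = inner ℝ (q - p) (q'' - p) / (‖q - p‖ * ‖q'' - p‖)) :
    Real.sin (θ / 2) ≤ ‖q'' - q‖ / ‖p - q‖ := by
  have ha : (0:ℝ) < ‖q - p‖ := by
    rw [norm_sub_pos_iff]; exact fun h => hpq h.symm
  have hb : (0:ℝ) < ‖q'' - p‖ := by
    rw [norm_sub_pos_iff]; exact fun h => hpq'' h.symm
  set a := ‖q - p‖
  set b := ‖q'' - p‖
  set c := ‖q'' - q‖ with hc
  set t := Real.cos θ with ht
  have hinner : (inner ℝ (q - p) (q'' - p) : ℝ) = a * b * t := by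
    rw [hcos]; field_simp
  have hsub : q'' - q = (q'' - p) - (q - p) := by abel
  have hlaw : c ^ 2 = b ^ 2 - 2 * (a * b * t) + a ^ 2 := by
    rw [hc, hsub, @norm_sub_sq_real, real_inner_comm, hinner]
  have hs : Real.sin (θ / 2) ^ 2 = (1 - t) / 2 := by
    have h := Real.sin_sq_eq_half_sub (θ / 2)
    have h2 : 2 * (θ / 2) = θ := by ring
    rw [h2] at h
    rw [h, ht]; ring
  have hs0 : 0 ≤ Real.sin (θ / 2) :=
    Real.sin_nonneg_of_nonneg_of_le_pi (by linarith) (by linarith [Real.pi_pos])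
  have ht1 : t ≤ 1 := Real.cos_le_one θ
  have ht2 : -1 ≤ t := Real.neg_one_le_cos θ
  have hpqn : ‖p - q‖ = a := norm_sub_rev p q
  rw [hpqn, le_div_iff₀ ha]
  have hc0 : 0 ≤ c := norm_nonneg _
  have h1 : (Real.sin (θ / 2) * a) ^ 2 ≤ c ^ 2 := by
    nlinarith [mul_nonneg (by linarith : (0:ℝ) ≤ 1 + t) (sq_nonneg (a - b)),
      mul_nonneg (by linarith : (0:ℝ) ≤ 1 - t) (sq_nonneg b),
      mul_nonneg (mul_nonneg (by linarith : (0:ℝ) ≤ 1 - t) ha.le) hb.le]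
  nlinarith [h1, mul_nonneg hs0 ha.le, hc0]
end

section
/- Consider a k-means iteration in which a cluster C₂ with center c₂ = cm(C₂) gains a single point x and no other point changes clusters of C₂, where ‖x − c₂‖ ≥ ρ. Then the movement of the center satisfies ‖cm(C₂ ∪ {x}) − cm(C₂)‖ ≥ ρ/(|C₂| + 1), and consequently the resulting potential drop from recentering is at least ρ²/(|C₂| + 1). -/
theorem stmt_19 (d : ℕ) [DecidableEq (EuclideanSpace ℝ (Fin d))]
    (C₂ : Finset (EuclideanSpace ℝ (Fin d))) (hC₂ : C₂.Nonempty)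
    (x : EuclideanSpace ℝ (Fin d)) (hx : x ∉ C₂)
    (ρ : ℝ) (hρ : 0 ≤ ρ) (hfar : ρ ≤ ‖x - cm C₂‖) :
    ρ / (C₂.card + 1) ≤ ‖cm (C₂ ∪ {x}) - cm C₂‖ ∧
    ρ ^ 2 / (C₂.card + 1) ≤
      ((C₂.card : ℝ) + 1) * ‖cm (C₂ ∪ {x}) - cm C₂‖ ^ 2 := by
  set n : ℝ := (C₂.card : ℝ) with hn
  have hnpos : 0 < n := by
    rw [hn]; exact_mod_cast Finset.card_pos.mpr hC₂
  have hn1 : (0:ℝ) < n + 1 := by linarith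
  have hcard : ((C₂ ∪ {x}).card : ℝ) = n + 1 := by
    rw [Finset.union_comm, ← Finset.insert_eq, Finset.card_insert_of_notMem hx]
    push_cast [hn]; ring
  have hsum : ∑ y ∈ C₂ ∪ {x}, y = (∑ y ∈ C₂, y) + x := by
    rw [Finset.union_comm, ← Finset.insert_eq, Finset.sum_insert hx]
    abel
  have hkey : cm (C₂ ∪ {x}) - cm C₂ = (n + 1)⁻¹ • (x - cm C₂) := by
    have hcm : (∑ y ∈ C₂, y) = n • cm C₂ := by
      rw [cm, smul_smul, mul_inv_cancel₀ hnpos.ne', one_smul]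
    rw [cm, hcard, hsum, hcm, smul_sub, smul_add]
    rw [smul_smul]
    have : (n + 1)⁻¹ * n = 1 - (n + 1)⁻¹ := by
      field_simp
      ring
    rw [this, sub_smul, one_smul]
    abel
  have hnorm : ‖cm (C₂ ∪ {x}) - cm C₂‖ = (n + 1)⁻¹ * ‖x - cm C₂‖ := by
    rw [hkey, norm_smul, Real.norm_eq_abs, abs_of_pos (inv_pos.mpr hn1)]
  constructor
  · rw [hnorm, div_eq_inv_mul]
    exact mul_le_mul_of_nonneg_left hfar (by positivity)
  · rw [hnorm]
    rw [mul_pow, ← mul_assoc]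
    have h1 : (n + 1) * ((n + 1)⁻¹)^2 = (n + 1)⁻¹ := by
      field_simp
    rw [h1, div_eq_inv_mul]
    have : ρ^2 ≤ ‖x - cm C₂‖^2 := by nlinarith [norm_nonneg (x - cm C₂)]
    exact mul_le_mul_of_nonneg_left this (by positivity)
end
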